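/- Let k ≥ 2 be an integer and let α be a real number with 1 < α < 2 satisfying α^k = α^{k−1} + α^{k−2} + ⋯ + α + 1. Then for every integer n ≥ 1, α^{n−2} ≤ F_n^{(k)} ≤ α^{n−1}. -/

import Mathlib

private lemma sum_reflect' {M : Type*} [AddCommMonoid M] (f : ℤ → M) (a b c : ℤ) :
    ∑ j ∈ Finset.Icc a b, f (c - j) = ∑ i ∈ Finset.Icc (c - b) (c - a), f i := by
  apply Finset.sum_nbij' (i := fun j => c - j) (j := fun i => c - i) <;>
    simp [Finset.mem_Icc] <;> omega

private lemma sum_Icc_zpow' (α : ℝ) (hα : 0 < α) (k : ℕ)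
    (hroot : α ^ k = ∑ i ∈ Finset.range k, α ^ i) (c : ℤ) :
    ∑ j ∈ Finset.Icc (1 : ℤ) (k : ℤ), α ^ (c - j) = α ^ c := by
  have hne : α ≠ 0 := ne_of_gt hα
  have h1 : ∑ j ∈ Finset.Icc (1 : ℤ) (k : ℤ), α ^ (c - j)
      = ∑ t ∈ Finset.range k, α ^ (c - k + t) := by
    apply Finset.sum_nbij' (i := fun j : ℤ => ((k:ℤ) - j).toNat)
      (j := fun t : ℕ => (k : ℤ) - (t:ℤ))
    · intro a ha; simp [Finset.mem_Icc, Finset.mem_range] at *; omega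
    · intro a ha; simp [Finset.mem_Icc, Finset.mem_range] at *; omega
    · intro a ha; simp [Finset.mem_Icc] at ha; omega
    · intro a ha; simp at ha; omega
    · intro a ha; simp [Finset.mem_Icc] at ha; congr 1; omega
  rw [h1]
  have h2 : ∀ t ∈ Finset.range k, α ^ (c - k + t) = α ^ (c - k) * α ^ t := by
    intro t _
    rw [zpow_add₀ hne, zpow_natCast]
  rw [Finset.sum_congr rfl h2, ← Finset.mul_sum, ← hroot, ← zpow_natCast α k,
    ← zpow_add₀ hne]
  congr 1; omega

section Main

variable (k : ℕ) (hk : 2 ≤ k) (F : ℤ → ℤ)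
  (hF0 : ∀ i : ℤ, 2 - (k : ℤ) ≤ i → i ≤ 0 → F i = 0)
  (hF1 : F 1 = 1)
  (hFrec : ∀ i : ℤ, 2 ≤ i → F i = ∑ j ∈ Finset.Icc (1 : ℤ) (k : ℤ), F (i - j))

include hk hF0 hF1 hFrec

private lemma F_two_pow : ∀ m : ℤ, 2 ≤ m → m ≤ (k : ℤ) + 1 → F m = 2 ^ (m - 2).toNat := by
  have hIcc : ∀ m : ℤ, 2 ≤ m → F m = ∑ i ∈ Finset.Icc (m - k) (m - 1), F i := by
    intro m hm
    rw [hFrec m hm, sum_reflect']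
  intro m hm
  refine Int.le_induction (motive := fun m _ => m ≤ (k:ℤ)+1 → F m = 2 ^ (m-2).toNat) ?_ ?_ m hm
  · intro _
    rw [hIcc 2 le_rfl, show (2:ℤ)-1 = 1 by ring]
    have h2 : Finset.Icc (2 - (k:ℤ)) (1:ℤ) = insert 1 (Finset.Icc (2 - (k:ℤ)) 0) := by
      ext x; simp [Finset.mem_Icc, Finset.mem_insert]; omega
    rw [h2, Finset.sum_insert (by simp only [Finset.mem_Icc, not_and, not_le]; omega), hF1,
      Finset.sum_eq_zero (fun i hi => hF0 i (by simp [Finset.mem_Icc] at hi; omega)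
        (by simp [Finset.mem_Icc] at hi; omega))]
    simp
  · intro m hm2 ih hmk
    have hmk' : m ≤ (k : ℤ) := by omega
    have hS1 : Finset.Icc (m + 1 - (k:ℤ)) m = insert m (Finset.Icc (m + 1 - (k:ℤ)) (m - 1)) := by
      ext x; simp [Finset.mem_Icc, Finset.mem_insert]; omega
    have hS2 : Finset.Icc (m - (k:ℤ)) (m - 1)
        = insert (m - (k:ℤ)) (Finset.Icc (m + 1 - (k:ℤ)) (m - 1)) := by
      ext x; simp [Finset.mem_Icc, Finset.mem_insert]; omega
    have e1 : F (m + 1) = F m + ∑ i ∈ Finset.Icc (m + 1 - (k:ℤ)) (m - 1), F i := by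
      rw [hIcc (m+1) (by omega)]
      rw [show m + 1 - (k:ℤ) = m + 1 - (k:ℤ) from rfl, show m + 1 - 1 = m by ring, hS1,
        Finset.sum_insert (by simp only [Finset.mem_Icc, not_and, not_le]; omega)]
    have e2 : F m = F (m - (k:ℤ)) + ∑ i ∈ Finset.Icc (m + 1 - (k:ℤ)) (m - 1), F i := by
      rw [hIcc m hm2, hS2, Finset.sum_insert (by simp only [Finset.mem_Icc, not_and, not_le]; omega)]
    have e3 : F (m - (k:ℤ)) = 0 := hF0 _ (by omega) (by omega)
    have : F (m + 1) = 2 * F m := by omega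
    rw [this, ih (by omega)]
    have : (m + 1 - 2).toNat = (m - 2).toNat + 1 := by omega
    rw [this, pow_succ]
    ring


private lemma F_upper (α : ℝ) (hα1 : 1 < α)
    (hroot : α ^ k = ∑ i ∈ Finset.range k, α ^ i) :
    ∀ m : ℕ, (F (1 + (m : ℤ)) : ℝ) ≤ α ^ ((m : ℤ)) := by
  have hα0 : (0:ℝ) < α := by linarith
  intro m
  induction m using Nat.strong_induction_on with
  | _ m ih =>
    rcases Nat.eq_zero_or_pos m with hm0 | hm1
    · subst hm0; simp [hF1]
    · have hn2 : (2:ℤ) ≤ 1 + (m:ℤ) := by omega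
      rw [hFrec _ hn2]
      push_cast
      calc ∑ j ∈ Finset.Icc (1:ℤ) (k:ℤ), (F (1 + (m:ℤ) - j) : ℝ)
          ≤ ∑ j ∈ Finset.Icc (1:ℤ) (k:ℤ), α ^ ((m:ℤ) - j) := by
            apply Finset.sum_le_sum
            intro j hj
            simp only [Finset.mem_Icc] at hj
            by_cases hpos : 1 ≤ 1 + (m:ℤ) - j
            · have hlt : (1 + (m:ℤ) - j - 1).toNat < m := by omega
              have h := ih _ hlt
              have he : 1 + ((1 + (m:ℤ) - j - 1).toNat : ℤ) = 1 + (m:ℤ) - j := by omega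
              rw [he] at h
              have he2 : ((1 + (m:ℤ) - j - 1).toNat : ℤ) = (m:ℤ) - j := by omega
              rw [he2] at h
              exact h
            · have hz : F (1 + (m:ℤ) - j) = 0 := hF0 _ (by omega) (by omega)
              rw [hz]
              push_cast
              positivity
        _ = α ^ ((m:ℤ)) := sum_Icc_zpow' α hα0 k hroot _

private lemma F_lower (α : ℝ) (hα1 : 1 < α) (hα2 : α < 2)
    (hroot : α ^ k = ∑ i ∈ Finset.range k, α ^ i) :
    ∀ m : ℕ, α ^ ((m : ℤ) - 1) ≤ (F (1 + (m : ℤ)) : ℝ) := by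
  have hα0 : (0:ℝ) < α := by linarith
  intro m
  induction m using Nat.strong_induction_on with
  | _ m ih =>
    rcases Nat.eq_zero_or_pos m with hm0 | hm1
    · subst hm0
      simp only [Nat.cast_zero, zero_sub]
      rw [show (1:ℤ) + 0 = 1 by ring, hF1]
      rw [zpow_neg, zpow_one]
      push_cast
      rw [inv_le_one_iff₀]
      right; exact hα1.le
    · by_cases hmk : (m:ℤ) ≤ (k:ℤ)
      · -- 1 ≤ m ≤ k, so 2 ≤ 1+m ≤ k+1 : use the power-of-two formula
        have hf := F_two_pow k hk F hF0 hF1 hFrec (1 + (m:ℤ)) (by omega) (by omega)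
        rw [hf]
        have ht : (1 + (m:ℤ) - 2).toNat = m - 1 := by omega
        rw [ht]
        push_cast
        rw [show (m:ℤ) - 1 = ((m - 1 : ℕ) : ℤ) by omega, zpow_natCast]
        exact pow_le_pow_left₀ hα0.le hα2.le _
      · have hn2 : (2:ℤ) ≤ 1 + (m:ℤ) := by omega
        rw [hFrec _ hn2]
        push_cast
        calc α ^ ((m:ℤ) - 1) = ∑ j ∈ Finset.Icc (1:ℤ) (k:ℤ), α ^ ((m:ℤ) - 1 - j) :=
              (sum_Icc_zpow' α hα0 k hroot _).symm
          _ ≤ ∑ j ∈ Finset.Icc (1:ℤ) (k:ℤ), (F (1 + (m:ℤ) - j) : ℝ) := by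
            apply Finset.sum_le_sum
            intro j hj
            simp only [Finset.mem_Icc] at hj
            have hpos : 1 ≤ 1 + (m:ℤ) - j := by omega
            have hlt : (1 + (m:ℤ) - j - 1).toNat < m := by omega
            have h := ih _ hlt
            have he : 1 + ((1 + (m:ℤ) - j - 1).toNat : ℤ) = 1 + (m:ℤ) - j := by omega
            have he2 : ((1 + (m:ℤ) - j - 1).toNat : ℤ) - 1 = (m:ℤ) - 1 - j := by omega
            rw [he, he2] at h
            exact h

end Main

/-- Bravo–Luca: if `α ∈ (1,2)` satisfies `α^k = α^{k-1} + ⋯ + α + 1`, then for every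
integer `n ≥ 1`, `α^{n−2} ≤ F_n^{(k)} ≤ α^{n−1}`. -/
theorem kFib_alpha_pow_bounds
    (k : ℕ) (hk : 2 ≤ k)
    (F : ℤ → ℤ)
    (hF0 : ∀ i : ℤ, 2 - (k : ℤ) ≤ i → i ≤ 0 → F i = 0)
    (hF1 : F 1 = 1)
    (hFrec : ∀ i : ℤ, 2 ≤ i → F i = ∑ j ∈ Finset.Icc (1 : ℤ) (k : ℤ), F (i - j))
    (α : ℝ) (hα1 : 1 < α) (hα2 : α < 2)
    (hroot : α ^ k = ∑ i ∈ Finset.range k, α ^ i)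
    (n : ℤ) (hn : 1 ≤ n) :
    α ^ (n - 2) ≤ (F n : ℝ) ∧ (F n : ℝ) ≤ α ^ (n - 1) := by
  have hn' : n = 1 + ((n - 1).toNat : ℤ) := by omega
  rw [hn', show 1 + ((n - 1).toNat : ℤ) - 2 = ((n-1).toNat : ℤ) - 1 by ring,
    show 1 + ((n - 1).toNat : ℤ) - 1 = ((n-1).toNat : ℤ) by ring]
  exact ⟨F_lower k hk F hF0 hF1 hFrec α hα1 hα2 hroot _,
    F_upper k hk F hF0 hF1 hFrec α hα1 hroot _⟩
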